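/- If λ_n denotes the largest real root of LT_n(x) = x^{2n} - x^{n+1} - x^n - x^{n-1} + 1, then the sequence (λ_n)^n is strictly monotone decreasing in n. -/

import Mathlib

private lemma phi_lt {u v : ℝ} (hu : 1 < u) (huv : u < v) : u + u⁻¹ < v + v⁻¹ := by
  have hu0 : (0:ℝ) < u := by linarith
  have hv0 : (0:ℝ) < v := by linarith
  have h1 : u * u⁻¹ = 1 := mul_inv_cancel₀ (ne_of_gt hu0)
  have h2 : v * v⁻¹ = 1 := mul_inv_cancel₀ (ne_of_gt hv0)
  have huv1 : (0:ℝ) < u * v - 1 := by nlinarith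
  have e : v + v⁻¹ - (u + u⁻¹) = (v - u) * (u * v - 1) / (u * v) := by
    field_simp; ring
  have hpos : (0:ℝ) < (v - u) * (u * v - 1) / (u * v) :=
    div_pos (mul_pos (by linarith) huv1) (by positivity)
  linarith

private lemma phi_le {u v : ℝ} (hu : 1 < u) (huv : u ≤ v) : u + u⁻¹ ≤ v + v⁻¹ := by
  rcases eq_or_lt_of_le huv with h | h
  · rw [h]
  · exact le_of_lt (phi_lt hu h)

private lemma pow_sub_ge {u v : ℝ} (hu : 1 ≤ u) (huv : u ≤ v) (k : ℕ) :
    v - u ≤ v ^ (k + 1) - u ^ (k + 1) := by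
  induction k with
  | zero => simp
  | succ k ih =>
    have hVU : u ^ (k + 1) ≤ v ^ (k + 1) := pow_le_pow_left₀ (by linarith) huv _
    have hV1 : (1:ℝ) ≤ v ^ (k + 1) := one_le_pow₀ (by linarith)
    have e1 : v ^ (k + 2) = v * v ^ (k + 1) := by ring
    have e2 : u ^ (k + 2) = u * u ^ (k + 1) := by ring
    nlinarith [ih, hVU, hV1]

private lemma key {x : ℝ} {k : ℕ} (hk : 2 ≤ k) (hx : 1 < x)
    (he : x ^ (2 * k) - x ^ (k + 1) - x ^ k - x ^ (k - 1) + 1 = 0) :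
    x ^ k + (x ^ k)⁻¹ = x + 1 + x⁻¹ := by
  have hx0 : (0:ℝ) < x := by linarith
  have hxk : (0:ℝ) < x ^ k := pow_pos hx0 k
  have hk1 : x ^ (k - 1) * x = x ^ k := by
    rw [← pow_succ]; congr 1; omega
  have h2k : x ^ (2 * k) = x ^ k * x ^ k := by rw [← pow_add]; congr 1; omega
  have hks : x ^ (k + 1) = x ^ k * x := by rw [pow_succ]
  field_simp
  nlinarith [he, hk1, h2k, hks, mul_pos hx0 hxk]

private lemma psi_mono {u v : ℝ} {k : ℕ} (hk : 2 ≤ k) (hu : 1 < u) (huv : u < v) :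
    u ^ k + (u ^ k)⁻¹ - (u + u⁻¹) < v ^ k + (v ^ k)⁻¹ - (v + v⁻¹) := by
  have hu0 : (0:ℝ) < u := by linarith
  have hv0 : (0:ℝ) < v := by linarith
  have hU : (1:ℝ) < u ^ k := one_lt_pow₀ hu (by omega)
  have hV : (1:ℝ) < v ^ k := one_lt_pow₀ (by linarith) (by omega)
  have hUV : u * v < u ^ k * v ^ k := by
    have h1 : u * v ≤ u ^ k * v := by
      have : u ≤ u ^ k := by
        calc u = u ^ 1 := (pow_one u).symm
        _ ≤ u ^ k := pow_le_pow_right₀ (le_of_lt hu) (by omega)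
      nlinarith
    have h2 : u ^ k * v < u ^ k * v ^ k := by
      have : v < v ^ k := by
        calc v = v ^ 1 := (pow_one v).symm
        _ < v ^ k := pow_lt_pow_right₀ (by linarith) (by omega)
      nlinarith
    linarith
  have huv1 : (1:ℝ) < u * v := by nlinarith
  have hdiff : v - u ≤ v ^ k - u ^ k := by
    have := pow_sub_ge (le_of_lt hu) (le_of_lt huv) (k - 1)
    have hkk : k - 1 + 1 = k := by omega
    rwa [hkk] at this
  have e1 : v ^ k + (v ^ k)⁻¹ - (u ^ k + (u ^ k)⁻¹)
      = (v ^ k - u ^ k) * (1 - (u ^ k * v ^ k)⁻¹) := by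
    field_simp
    ring
  have e2 : v + v⁻¹ - (u + u⁻¹) = (v - u) * (1 - (u * v)⁻¹) := by
    field_simp
    ring
  have hi1 : (u ^ k * v ^ k)⁻¹ < (u * v)⁻¹ := by
    apply inv_strictAnti₀ (by linarith) hUV
  have hi2 : (u * v)⁻¹ < 1 := by
    rw [inv_lt_one_iff₀]; right; exact huv1
  have hi3 : (0:ℝ) < 1 - (u * v)⁻¹ := by linarith
  have hlt : (v - u) * (1 - (u * v)⁻¹) < (v ^ k - u ^ k) * (1 - (u ^ k * v ^ k)⁻¹) := by
    have hvu : (0:ℝ) < v - u := by linarith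
    nlinarith [hdiff, hi1, hi3, hvu]
  linarith [e1, e2, hlt]

theorem LT_root_pow_strict_anti (lam : ℕ → ℝ)
    (hlam : ∀ n, 2 ≤ n → 1 < lam n ∧
      (lam n) ^ (2 * n) - (lam n) ^ (n + 1) - (lam n) ^ n - (lam n) ^ (n - 1) + 1 = 0) :
    ∀ m n : ℕ, 2 ≤ m → m < n → (lam n) ^ n < (lam m) ^ m := by
  intro m n hm hmn
  obtain ⟨ha, hea⟩ := hlam m hm
  have hn : 2 ≤ n := by omega
  obtain ⟨hb, heb⟩ := hlam n hn
  set a := lam m with ha_def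
  set b := lam n with hb_def
  have Ka : a ^ m + (a ^ m)⁻¹ = a + 1 + a⁻¹ := key hm ha hea
  have Kb : b ^ n + (b ^ n)⁻¹ = b + 1 + b⁻¹ := key hn hb heb
  have ham : 1 < a ^ m := one_lt_pow₀ ha (by omega)
  have hbn : 1 < b ^ n := one_lt_pow₀ hb (by omega)
  have han : 1 < a ^ n := one_lt_pow₀ ha (by omega)
  -- psi_n(a) > 0 : a^n + (a^n)⁻¹ > a + 1 + a⁻¹
  have h1 : a ^ m < a ^ n := pow_lt_pow_right₀ ha hmn
  have h2 : a ^ m + (a ^ m)⁻¹ < a ^ n + (a ^ n)⁻¹ := phi_lt ham h1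
  have hpsia : a + 1 + a⁻¹ < a ^ n + (a ^ n)⁻¹ := by linarith [Ka]
  -- show b < a
  have hba : b < a := by
    by_contra h
    push_neg at h  -- a ≤ b
    rcases eq_or_lt_of_le h with heq | hlt
    · rw [heq] at hpsia
      linarith [Kb]
    · have := psi_mono hn ha hlt
      linarith [Kb, hpsia, this]
  -- conclude
  have h3 : b + b⁻¹ < a + a⁻¹ := phi_lt hb hba
  have h4 : b ^ n + (b ^ n)⁻¹ < a ^ m + (a ^ m)⁻¹ := by linarith [Ka, Kb]
  by_contra h
  push_neg at h  -- a^m ≤ b^n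
  have := phi_le ham h
  linarith
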